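/- Let V(t), t ∈ ℝ, be a continuous (respectively smooth) family of complemented subspaces of a Banach space X. Then for every t₀ ∈ ℝ there exist an open interval I containing t₀ and a continuous (respectively smooth) family of isomorphisms Φ(t) : X → X for t ∈ I, with Φ(t₀) = id, such that Φ(t)(V(t₀)) = V(t) for all t ∈ I. -/

import Mathlib

/-!
Statement 6 (Lemma `ThmStraight`, local trivialization of a family of subspaces):
Let `V(t)`, `t ∈ ℝ`, be a continuous (resp. smooth) family of complemented subspaces of a
Banach space `X`.  Then for every `t₀ ∈ ℝ` there is an open interval `I ∋ t₀` and a
continuous (resp. smooth) family of isomorphisms `Φ(t) : X → X`, `t ∈ I`, with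
`Φ(t₀) = id` and `Φ(t)(V(t₀)) = V(t)` for all `t ∈ I`.

Here regularity is parametrized by `n : ℕ∞` (`n = 0` is the continuous case, `n = ⊤`
the smooth case).
-/

/-- A `C^n`-regular family of complemented subspaces of `X`: each `V t` is a closed
complemented subspace, and locally near each `t₀` there are operators `T t` depending
`C^n` on `t` (in operator norm) such that `x ↦ x + T t x` maps `V t₀` isomorphically
onto `V t`. -/
def IsRegularFamilyOfSubspaces {X : Type*} [NormedAddCommGroup X] [NormedSpace ℝ X]
    (n : ℕ∞) (V : ℝ → Submodule ℝ X) : Prop :=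
  (∀ t : ℝ, ∃ ρ : X →L[ℝ] X, IsIdempotentElem ρ ∧ LinearMap.range (ρ : X →ₗ[ℝ] X) = V t) ∧
  ∀ t₀ : ℝ, ∃ ε > (0 : ℝ), ∃ T : ℝ → X →L[ℝ] X,
    ContDiffOn ℝ n T (Metric.ball t₀ ε) ∧
    ∀ t ∈ Metric.ball t₀ ε,
      (V t₀).map ((ContinuousLinearMap.id ℝ X + T t : X →L[ℝ] X) : X →ₗ[ℝ] X) = V t ∧
      Set.InjOn (ContinuousLinearMap.id ℝ X + T t) (V t₀)

theorem local_trivialization_of_family_of_subspaces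
    {X : Type*} [NormedAddCommGroup X] [NormedSpace ℝ X] [CompleteSpace X]
    (n : ℕ∞) (V : ℝ → Submodule ℝ X)
    (hV : IsRegularFamilyOfSubspaces n V) (t₀ : ℝ) :
    ∃ ε > (0 : ℝ), ∃ Φ : ℝ → X →L[ℝ] X,
      ContDiffOn ℝ n Φ (Metric.ball t₀ ε) ∧
      Φ t₀ = ContinuousLinearMap.id ℝ X ∧
      ∀ t ∈ Metric.ball t₀ ε,
        (∃ Ψ : X →L[ℝ] X, Φ t * Ψ = 1 ∧ Ψ * Φ t = 1) ∧
        (V t₀).map (Φ t : X →ₗ[ℝ] X) = V t := by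
  obtain ⟨hproj, hT0⟩ := hV
  obtain ⟨ρ, hρ, hρrange⟩ := hproj t₀
  obtain ⟨ε, hε, T, hTcd, hTmap⟩ := hT0 t₀
  have ht₀mem : t₀ ∈ Metric.ball t₀ ε := Metric.mem_ball_self hε
  have hρfix : ∀ v ∈ V t₀, ρ v = v := by
    intro v hv
    rw [← hρrange] at hv
    obtain ⟨x, rfl⟩ := hv
    have := congrArg (fun f : X →L[ℝ] X => f x) hρ
    simpa using this
  have hρmemV : ∀ x : X, ρ x ∈ V t₀ := fun x => hρrange ▸ ⟨x, rfl⟩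
  set S : ℝ → X →L[ℝ] X := fun t => 1 + T t * ρ with hSdef
  have hSapply : ∀ t x, S t x = x + T t (ρ x) := by intro t x; simp [hSdef]
  have hSonV : ∀ t, ∀ v ∈ V t₀, S t v = (ContinuousLinearMap.id ℝ X + T t) v := by
    intro t v hv
    simp [hSapply, hρfix v hv]
  have hSmap : ∀ t ∈ Metric.ball t₀ ε, (V t₀).map (S t : X →ₗ[ℝ] X) = V t := by
    intro t ht
    rw [← (hTmap t ht).1]
    apply le_antisymm
    · rintro _ ⟨v, hv, rfl⟩
      exact ⟨v, hv, (hSonV t v hv).symm⟩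
    · rintro _ ⟨v, hv, rfl⟩
      exact ⟨v, hv, hSonV t v hv⟩
  -- injectivity of S t₀
  have hSker : LinearMap.ker (S t₀ : X →ₗ[ℝ] X) = ⊥ := by
    rw [LinearMap.ker_eq_bot']
    intro x hx0
    have hx' : x + T t₀ (ρ x) = 0 := by rw [← hSapply]; exact hx0
    have keq : ρ x + T t₀ (ρ x) = ρ x - x := by
      have : T t₀ (ρ x) = -x := by
        have := neg_eq_of_add_eq_zero_right hx'
        rw [← this]
      rw [this]; abel
    have hVv : ρ x + T t₀ (ρ x) ∈ V t₀ := by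
      rw [← (hTmap t₀ ht₀mem).1]
      exact ⟨ρ x, hρmemV x, by simp⟩
    have h2 := hρfix _ hVv
    rw [keq, map_sub, hρfix _ (hρmemV x), sub_self] at h2
    -- h2 : 0 = ρ x - x
    have hxρ : x = ρ x := by
      have h4 := h2.symm
      rw [sub_eq_zero] at h4
      exact h4.symm
    have hz : (ContinuousLinearMap.id ℝ X + T t₀) (ρ x) = 0 := by
      have : ρ x + T t₀ (ρ x) = 0 := by nth_rewrite 1 [← hxρ]; exact hx'
      simpa using this
    have hρx0 : ρ x = 0 := by
      have hinj := (hTmap t₀ ht₀mem).2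
      have := hinj (hρmemV x) (V t₀).zero_mem (by simpa using hz)
      exact this
    rw [hxρ, hρx0]
  -- surjectivity of S t₀
  have hSrange : LinearMap.range (S t₀ : X →ₗ[ℝ] X) = ⊤ := by
    rw [LinearMap.range_eq_top]
    intro y
    have hρy : ρ y ∈ (V t₀).map ((ContinuousLinearMap.id ℝ X + T t₀ : X →L[ℝ] X) : X →ₗ[ℝ] X) := by
      rw [(hTmap t₀ ht₀mem).1]; exact hρmemV y
    obtain ⟨v, hv, hveq⟩ := hρy
    refine ⟨v + (y - ρ y), ?_⟩
    have hρx : ρ (v + (y - ρ y)) = v := by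
      rw [map_add, map_sub, hρfix v hv, hρfix _ (hρmemV y), sub_self, add_zero]
    rw [ContinuousLinearMap.coe_coe, hSapply, hρx]
    have : v + T t₀ v = ρ y := by simpa using hveq
    calc v + (y - ρ y) + T t₀ v = (v + T t₀ v) + (y - ρ y) := by abel
      _ = y := by rw [this]; abel
  set e : X ≃L[ℝ] X := ContinuousLinearEquiv.ofBijective (S t₀) hSker hSrange with hedef
  set U : X →L[ℝ] X := (e.symm : X →L[ℝ] X) with hUdef
  have hSU : S t₀ * U = 1 := by
    ext x
    show S t₀ (e.symm x) = x
    exact ContinuousLinearEquiv.ofBijective_apply_symm_apply _ _ _ x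
  have hUS : U * S t₀ = 1 := by
    ext x
    show e.symm (S t₀ x) = x
    exact ContinuousLinearEquiv.ofBijective_symm_apply_apply _ _ _ x
  -- choose δ by continuity
  have hcont : ContinuousAt T t₀ :=
    (hTcd.continuousOn.continuousAt (Metric.isOpen_ball.mem_nhds ht₀mem))
  have hpos : (0:ℝ) < (‖ρ * U‖ + 1)⁻¹ := by positivity
  obtain ⟨δ, hδpos, hδ⟩ := Metric.continuousAt_iff.mp hcont _ hpos
  refine ⟨min ε δ, lt_min hε hδpos, fun t => S t * U, ?_, ?_, ?_⟩
  · -- smoothness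
    have : ContDiffOn ℝ n (fun t => (1 : X →L[ℝ] X) + T t * ρ) (Metric.ball t₀ ε) :=
      contDiffOn_const.add (hTcd.mul contDiffOn_const)
    exact (this.mul contDiffOn_const).mono
      (Metric.ball_subset_ball (min_le_left _ _))
  · simpa [ContinuousLinearMap.one_def] using hSU
  · intro t ht
    have htε : t ∈ Metric.ball t₀ ε :=
      Metric.ball_subset_ball (min_le_left _ _) ht
    constructor
    · -- invertibility
      have hdist : dist (T t) (T t₀) < (‖ρ * U‖ + 1)⁻¹ :=
        hδ (lt_of_lt_of_le (Metric.mem_ball.mp ht) (min_le_right _ _))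
      set a : X →L[ℝ] X := -((T t - T t₀) * (ρ * U)) with hadef
      have hnorm : ‖a‖ < 1 := by
        have h1 : ‖a‖ ≤ ‖T t - T t₀‖ * ‖ρ * U‖ := by
          rw [hadef, norm_neg]; exact norm_mul_le _ _
        have h2 : ‖T t - T t₀‖ < (‖ρ * U‖ + 1)⁻¹ := by
          rwa [← dist_eq_norm]
        have h3 : (0:ℝ) ≤ ‖ρ * U‖ := norm_nonneg _
        have h4 : ‖T t - T t₀‖ * (‖ρ * U‖ + 1) < 1 := by
          have h5 := mul_lt_mul_of_pos_right h2
            (show (0:ℝ) < ‖ρ * U‖ + 1 by positivity)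
          rwa [inv_mul_cancel₀
            (ne_of_gt (show (0:ℝ) < ‖ρ * U‖ + 1 by positivity))] at h5
        nlinarith [norm_nonneg (T t - T t₀)]
      set u : (X →L[ℝ] X)ˣ := Units.oneSub a hnorm with hudef
      have hval : (u : X →L[ℝ] X) = S t * U := by
        have h := hSU
        show (1 : X →L[ℝ] X) - a = S t * U
        simp only [hSdef] at h ⊢
        rw [hadef]
        nth_rewrite 1 [← h]
        noncomm_ring
      refine ⟨↑u⁻¹, ?_, ?_⟩
      · show S t * U * (↑u⁻¹ : X →L[ℝ] X) = 1
        rw [← hval]; exact u.mul_inv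
      · show (↑u⁻¹ : X →L[ℝ] X) * (S t * U) = 1
        rw [← hval]; exact u.inv_mul
    · -- image
      have hcomp : (V t₀).map ((S t * U : X →L[ℝ] X) : X →ₗ[ℝ] X) =
          ((V t₀).map (U : X →ₗ[ℝ] X)).map (S t : X →ₗ[ℝ] X) := by
        rw [← Submodule.map_comp]
        rfl
      have hUmap : (V t₀).map (U : X →ₗ[ℝ] X) = V t₀ := by
        have hS0 : (V t₀).map (S t₀ : X →ₗ[ℝ] X) = V t₀ := by
          rw [hSmap t₀ ht₀mem]
        apply le_antisymm
        · rintro _ ⟨v, hv, rfl⟩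
          rw [← hS0] at hv
          obtain ⟨w, hw, rfl⟩ := hv
          have : U (S t₀ w) = w :=
            ContinuousLinearEquiv.ofBijective_symm_apply_apply _ _ _ w
          rw [show (U : X →ₗ[ℝ] X) ((S t₀ : X →ₗ[ℝ] X) w) = U (S t₀ w) from rfl, this]
          exact hw
        · intro v hv
          refine ⟨S t₀ v, ?_, ?_⟩
          · rw [← hS0]; exact ⟨v, hv, rfl⟩
          · exact ContinuousLinearEquiv.ofBijective_symm_apply_apply _ _ _ v
      rw [hcomp, hUmap]
      exact hSmap t htε
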